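/- Let g be a nondegenerate symmetric bilinear form on a real vector space, A a symmetric bilinear form, X a vector, and define S(A)(X)_{αβ} via S(A)^μ_{αβ} = (1/2)(∇_α A^μ_β + ∇_β A_α^μ − ∇^μ A_{αβ}) and H^α = A^α_μ X^μ on a pseudo-Riemannian manifold (M, g) with Levi-Civita connection ∇. Then the identity (L_X A)_{αβ} + 2 X_μ S(A)^μ_{αβ} = (L_H g)_{αβ} holds, where L denotes the Lie derivative and indices are raised with g. -/
import Mathlib

private lemma contract1 {ι : Type*} [Fintype ι] [DecidableEq ι]
    (g ginv : ι → ι → ℝ)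
    (ginvsymm : ∀ a b, ginv a b = ginv b a)
    (hinv : ∀ a b, (∑ c, ginv a c * g c b) = if a = b then (1 : ℝ) else 0)
    (F : ι → ℝ) (β : ι) :
    (∑ μ, g μ β * (∑ ν, ginv μ ν * F ν)) = F β := by
  calc (∑ μ, g μ β * (∑ ν, ginv μ ν * F ν))
      = ∑ μ, ∑ ν, (ginv ν μ * g μ β) * F ν := by
        refine Finset.sum_congr rfl fun μ _ => ?_
        rw [Finset.mul_sum]
        exact Finset.sum_congr rfl fun ν _ => by rw [ginvsymm]; ring
    _ = ∑ ν, (∑ μ, ginv ν μ * g μ β) * F ν := by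
        rw [Finset.sum_comm]
        exact Finset.sum_congr rfl fun ν _ => (Finset.sum_mul ..).symm
    _ = F β := by
        simp only [hinv, ite_mul, one_mul, zero_mul]
        simp

private lemma contract2 {ι : Type*} [Fintype ι] [DecidableEq ι]
    (g ginv : ι → ι → ℝ)
    (gsymm : ∀ a b, g a b = g b a)
    (ginvsymm : ∀ a b, ginv a b = ginv b a)
    (hinv : ∀ a b, (∑ c, ginv a c * g c b) = if a = b then (1 : ℝ) else 0)
    (X T : ι → ℝ) :
    (∑ μ, (∑ ν, g μ ν * X ν) * (∑ ρ, ginv μ ρ * T ρ)) = ∑ ν, X ν * T ν := by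
  calc (∑ μ, (∑ ν, g μ ν * X ν) * (∑ ρ, ginv μ ρ * T ρ))
      = ∑ μ, ∑ ν, X ν * (g μ ν * (∑ ρ, ginv μ ρ * T ρ)) := by
        refine Finset.sum_congr rfl fun μ _ => ?_
        rw [Finset.sum_mul]
        exact Finset.sum_congr rfl fun ν _ => by ring
    _ = ∑ ν, X ν * (∑ μ, g μ ν * (∑ ρ, ginv μ ρ * T ρ)) := by
        rw [Finset.sum_comm]
        exact Finset.sum_congr rfl fun ν _ => (Finset.mul_sum ..).symm
    _ = ∑ ν, X ν * T ν := by
        refine Finset.sum_congr rfl fun ν _ => ?_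
        rw [contract1 g ginv ginvsymm hinv T ν]

theorem stmt_18
    (ι : Type*) [Fintype ι] [DecidableEq ι]
    (g ginv : ι → ι → ℝ)
    (gsymm : ∀ a b, g a b = g b a)
    (ginvsymm : ∀ a b, ginv a b = ginv b a)
    (hinv : ∀ a b, (∑ c, ginv a c * g c b) = if a = b then (1 : ℝ) else 0)
    (A : ι → ι → ℝ) (Asymm : ∀ a b, A a b = A b a)
    (DA : ι → ι → ι → ℝ) (DAsymm : ∀ a b c, DA a b c = DA a c b)
    (X : ι → ℝ) (DX : ι → ι → ℝ) :
    let S : ι → ι → ι → ℝ := fun μ α β =>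
      (1 / 2) * ((∑ ν, ginv μ ν * DA α ν β) + (∑ ν, ginv μ ν * DA β α ν)
        - (∑ ν, ginv μ ν * DA ν α β))
    let LXA : ι → ι → ℝ := fun α β =>
      (∑ μ, X μ * DA μ α β) + (∑ μ, A μ β * DX α μ) + (∑ μ, A α μ * DX β μ)
    let DH : ι → ι → ℝ := fun β α =>
      ∑ ν, ginv α ν * ((∑ μ, DA β ν μ * X μ) + (∑ μ, A ν μ * DX β μ))
    let LHg : ι → ι → ℝ := fun α β =>
      (∑ μ, g μ β * DH α μ) + (∑ μ, g α μ * DH β μ)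
    ∀ α β, LXA α β + 2 * (∑ μ, (∑ ν, g μ ν * X ν) * S μ α β) = LHg α β := by
  intro S LXA DH LHg α β
  have hS : (∑ μ, (∑ ν, g μ ν * X ν) * S μ α β)
      = (1/2) * ∑ ν, X ν * (DA α ν β + DA β α ν - DA ν α β) := by
    have := contract2 g ginv gsymm ginvsymm hinv X
      (fun ρ => DA α ρ β + DA β α ρ - DA ρ α β)
    calc (∑ μ, (∑ ν, g μ ν * X ν) * S μ α β)
        = (1/2) * ∑ μ, (∑ ν, g μ ν * X ν) *
            (∑ ρ, ginv μ ρ * (DA α ρ β + DA β α ρ - DA ρ α β)) := by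
          rw [Finset.mul_sum]
          refine Finset.sum_congr rfl fun μ _ => ?_
          simp only [S]
          rw [show (∑ ρ, ginv μ ρ * (DA α ρ β + DA β α ρ - DA ρ α β))
            = (∑ ν, ginv μ ν * DA α ν β) + (∑ ν, ginv μ ν * DA β α ν)
              - (∑ ν, ginv μ ν * DA ν α β) by
              simp only [mul_add, mul_sub, Finset.sum_add_distrib,
                Finset.sum_sub_distrib]]
          ring
      _ = (1/2) * ∑ ν, X ν * (DA α ν β + DA β α ν - DA ν α β) := by rw [this]
  have h1 : (∑ μ, g μ β * DH α μ)
      = (∑ μ, DA α β μ * X μ) + (∑ μ, A β μ * DX α μ) := by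
    have := contract1 g ginv ginvsymm hinv
      (fun ν => (∑ μ, DA α ν μ * X μ) + (∑ μ, A ν μ * DX α μ)) β
    simpa [DH] using this
  have h2 : (∑ μ, g α μ * DH β μ)
      = (∑ μ, DA β α μ * X μ) + (∑ μ, A α μ * DX β μ) := by
    have := contract1 g ginv ginvsymm hinv
      (fun ν => (∑ μ, DA β ν μ * X μ) + (∑ μ, A ν μ * DX β μ)) α
    calc (∑ μ, g α μ * DH β μ) = (∑ μ, g μ α * DH β μ) := by
          exact Finset.sum_congr rfl fun μ _ => by rw [gsymm]
      _ = _ := by simpa [DH] using this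
  simp only [LHg, LXA, h1, h2, hS]
  rw [Finset.mul_sum, Finset.mul_sum]
  have key : ∀ ν, X ν * DA ν α β + 2 * ((1/2) * (X ν * (DA α ν β + DA β α ν - DA ν α β)))
      = DA α β ν * X ν + DA β α ν * X ν := by
    intro ν
    rw [DAsymm α β ν]
    ring
  calc (∑ μ, X μ * DA μ α β) + (∑ μ, A μ β * DX α μ) + (∑ μ, A α μ * DX β μ)
        + ∑ ν, 2 * ((1/2) * (X ν * (DA α ν β + DA β α ν - DA ν α β)))
      = (∑ μ, (X μ * DA μ α β + 2 * ((1/2) * (X μ * (DA α μ β + DA β α μ - DA μ α β)))))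
        + (∑ μ, A μ β * DX α μ) + (∑ μ, A α μ * DX β μ) := by
        rw [Finset.sum_add_distrib]; ring
    _ = (∑ μ, (DA α β μ * X μ + DA β α μ * X μ))
        + (∑ μ, A β μ * DX α μ) + (∑ μ, A α μ * DX β μ) := by
        rw [Finset.sum_congr rfl fun μ _ => key μ,
          Finset.sum_congr rfl (fun μ (_ : μ ∈ Finset.univ) =>
            by rw [Asymm μ β] : ∀ μ ∈ Finset.univ, A μ β * DX α μ = A β μ * DX α μ)]
    _ = _ := by rw [Finset.sum_add_distrib]; ring
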